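/- Let s ≥ 2 and k ≥ 0 be integers. Every finite locally s-colourable simple graph G with at least one vertex (and with χ(G)+k ≤ |V(G)|) satisfies f_G(χ(G) + k) ≤ (s−1)(k+1) + 1. -/

import Mathlib

open SimpleGraph

/-- `σ` is a proper colouring of `G` with colours in `ℕ`. -/
def IsProperColoring {V : Type*} (G : SimpleGraph V) (σ : V → ℕ) : Prop :=
  ∀ ⦃u v : V⦄, G.Adj u v → σ u ≠ σ v

/-- The chromatic number of `G`, as a natural number. -/
noncomputable def chromNum {V : Type*} (G : SimpleGraph V) : ℕ :=
  sInf {n : ℕ | G.Colorable n}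

/-- The discrepancy `φ_σ(G)` of a proper colouring `σ` of `G`: the maximum, over all
induced subgraphs `G[S]` of `G`, of `|σ(S)| - χ(G[S])`. -/
noncomputable def colDisc {V : Type*} (G : SimpleGraph V) (σ : V → ℕ) : ℤ :=
  sSup {z : ℤ | ∃ S : Set V, z = ((σ '' S).ncard : ℤ) - (chromNum (G.induce S) : ℤ)}

/-- The chromatic discrepancy `φ(G)`: the minimum of `φ_σ(G)` over all proper
colourings `σ` of `G`. -/
noncomputable def chromDisc {V : Type*} (G : SimpleGraph V) : ℤ :=
  sInf {z : ℤ | ∃ σ : V → ℕ, IsProperColoring G σ ∧ z = colDisc G σ}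

/-- `G` is locally `s`-colourable: the closed neighbourhood of every vertex induces an
`s`-colourable subgraph. -/
def LocallyColorable {V : Type*} (G : SimpleGraph V) (s : ℕ) : Prop :=
  ∀ v : V, chromNum (G.induce (insert v (G.neighborSet v))) ≤ s

/-- The set of vertices at distance at most `r` from `v` in `G`. -/
def ballSet {V : Type*} (G : SimpleGraph V) (v : V) (r : ℕ) : Set V :=
  {u : V | ∃ w : G.Walk v u, w.length ≤ r}

/-- `G` is `r`-locally `s`-colourable: every ball of radius `r` induces an
`s`-colourable subgraph. -/
def RLocallyColorable {V : Type*} (G : SimpleGraph V) (r s : ℕ) : Prop :=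
  ∀ v : V, chromNum (G.induce (ballSet G v r)) ≤ s

/-- `G` contains no cycle of length exactly `n` as a (not necessarily induced) subgraph. -/
def CycleLenFree {V : Type*} (G : SimpleGraph V) (n : ℕ) : Prop :=
  ∀ (v : V) (w : G.Walk v v), w.IsCycle → w.length ≠ n

/-- `H` is `k`-degenerate: every non-empty (induced) subgraph contains a vertex of
degree at most `k` in it. -/
def Degenerate {α : Type*} (H : SimpleGraph α) (k : ℕ) : Prop :=
  ∀ S : Set α, S.Nonempty → ∃ a ∈ S, {b | b ∈ S ∧ H.Adj a b}.ncard ≤ k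

/-- `G` is co-locally `s`-colourable: for all vertices `u ≠ v`,
`χ(G[{u} ∪ N(v)]) ≤ s`. -/
def CoLocallyColorable {V : Type*} (G : SimpleGraph V) (s : ℕ) : Prop :=
  ∀ v u : V, u ≠ v → chromNum (G.induce (insert u (G.neighborSet v))) ≤ s

/-- The minimum of `χ(G[X])` over all subsets `X ⊆ V(G)` spanning exactly `p` colours
of `σ` (a rainbow cover of `σ` when `σ` uses exactly `p` colours). -/
noncomputable def minRainbowChrom {V : Type*} (G : SimpleGraph V) (σ : V → ℕ) (p : ℕ) : ℕ :=
  sInf {c : ℕ | ∃ X : Set V, (σ '' X).ncard = p ∧ c = chromNum (G.induce X)}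

/-- `f_G(p)`: the maximum, over all proper colourings `σ` of `G` using exactly `p`
colours, of the minimum chromatic number of a rainbow cover of `σ`. -/
noncomputable def fG {V : Type*} (G : SimpleGraph V) (p : ℕ) : ℕ :=
  sSup {m : ℕ | ∃ σ : V → ℕ, IsProperColoring G σ ∧ (σ '' Set.univ).ncard = p ∧
    m = minRainbowChrom G σ p}

/-- The closed neighbourhood `N[X]` of a set `X` of vertices. -/
def closedNbhd {V : Type*} (G : SimpleGraph V) (X : Set V) : Set V :=
  X ∪ {u : V | ∃ x ∈ X, G.Adj x u}

section Helpers
variable {V : Type*} [Fintype V] (G : SimpleGraph V)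

lemma chromNum_colorable : G.Colorable (chromNum G) := by
  classical
  have h : {n : ℕ | G.Colorable n}.Nonempty := ⟨Fintype.card V, G.colorable_of_fintype⟩
  exact Nat.sInf_mem h

lemma chromNum_le_of_colorable {n : ℕ} (h : G.Colorable n) : chromNum G ≤ n :=
  Nat.sInf_le h

lemma chromNum_pos [Nonempty V] : 1 ≤ chromNum G := by
  obtain ⟨C⟩ := chromNum_colorable G
  exact (C (Classical.arbitrary V)).pos

end Helpers

section Helpers2
variable {V : Type*} [Fintype V] (G : SimpleGraph V)

lemma colorable_of_coloring_card {α : Type*} [Fintype α] {n : ℕ}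
    (C : G.Coloring α) (h : Fintype.card α ≤ n) : G.Colorable n :=
  C.colorable.mono h

lemma ncard_eq_card_coe (s : Set ℕ) [Fintype s] : (s).ncard = Fintype.card s := by
  rw [← Nat.card_coe_set_eq, Nat.card_eq_fintype_card]

lemma chromNum_induce_le_ncard_image {σ : V → ℕ} (hσ : IsProperColoring G σ) (S : Set V) :
    chromNum (G.induce S) ≤ (σ '' S).ncard := by
  classical
  letI : Fintype ↥(σ '' S) := (Set.toFinite (σ '' S)).fintype
  have C : (G.induce S).Coloring ↥(σ '' S) :=
    SimpleGraph.Coloring.mk (fun x => ⟨σ x, ⟨x, x.2, rfl⟩⟩)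
      (by
        intro a b hab h
        exact hσ hab (congrArg Subtype.val h))
  refine le_trans (chromNum_le_of_colorable _ (colorable_of_coloring_card _ C le_rfl)) ?_
  rw [ncard_eq_card_coe]

lemma chromNum_induce_univ : chromNum (G.induce Set.univ) = chromNum G := by
  apply le_antisymm
  · exact chromNum_le_of_colorable _
      ((chromNum_colorable G).of_hom (induceUnivIso G).toEmbedding.toHom)
  · exact chromNum_le_of_colorable _
      ((chromNum_colorable (G.induce Set.univ)).of_hom (induceUnivIso G).symm.toEmbedding.toHom)

end Helpers2


/-- closed neighbourhood of `v` within `S` -/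
def nbS {V : Type*} (G : SimpleGraph V) (S : Set V) (v : V) : Set V :=
  insert v (G.neighborSet v) ∩ S

lemma mem_nbS_self {V : Type*} (G : SimpleGraph V) {S : Set V} {v : V} (hv : v ∈ S) :
    v ∈ nbS G S v := ⟨Set.mem_insert _ _, hv⟩

lemma mem_nbS_of_adj {V : Type*} {G : SimpleGraph V} {S : Set V} {v u : V} (hu : u ∈ S)
    (h : G.Adj v u) : u ∈ nbS G S v := ⟨Set.mem_insert_of_mem _ h, hu⟩

lemma nbS_subset {V : Type*} (G : SimpleGraph V) (S : Set V) (v : V) : nbS G S v ⊆ S :=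
  Set.inter_subset_right

lemma key_ineq {V : Type*} [Fintype V] (G : SimpleGraph V) {σ : V → ℕ}
    (hσ : IsProperColoring G σ) (S : Set V) (v₁ : V) (hv₁ : v₁ ∈ S)
    (hmax : ∀ v ∈ S, (σ '' nbS G S v).ncard ≤ (σ '' nbS G S v₁).ncard)
    (hU : (σ '' S \ σ '' nbS G S v₁).Nonempty) :
    chromNum (G.induce S) + 1 ≤
      chromNum (G.induce {x | x ∈ S ∧ σ x ∈ σ '' S \ σ '' nbS G S v₁}) + (σ '' nbS G S v₁).ncard := by
  classical
  set A : Set ℕ := σ '' nbS G S v₁ with hA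
  set U : Set ℕ := σ '' S \ A with hUdef
  set c₀ : ℕ := σ v₁ with hc₀
  set A' : Set ℕ := A \ {c₀} with hA'
  set H : Set V := {x | x ∈ S ∧ σ x ∈ U} with hH
  have hc₀A : c₀ ∈ A := ⟨v₁, mem_nbS_self G hv₁, rfl⟩
  -- H nonempty
  obtain ⟨c, hcU⟩ := hU
  obtain ⟨x₀, hx₀S, hx₀c⟩ := hcU.1
  haveI : Nonempty ↥H := ⟨⟨x₀, hx₀S, by rw [hx₀c]; exact hcU⟩⟩
  set q : ℕ := chromNum (G.induce H) with hq
  have hq1 : 1 ≤ q := chromNum_pos _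
  obtain ⟨τ⟩ := chromNum_colorable (G.induce H)
  letI : Fintype ↥A' := (Set.toFinite A').fintype
  -- the new coloring
  have hAmem : ∀ x : V, x ∈ S → σ x ∉ U → σ x ∈ A := fun x hxS hxU => by
    by_contra h
    exact hxU ⟨⟨x, hxS, rfl⟩, h⟩
  set f : ↥S → ↥A' ⊕ Fin q := fun x =>
    if hx : σ x.1 ∈ U then Sum.inr (τ ⟨x.1, x.2, hx⟩)
    else if hc : σ x.1 = c₀ then
      (if hw : ∃ m, m ∈ A' ∧ m ∉ σ '' nbS G S x.1 then
         Sum.inl ⟨Classical.choose hw, (Classical.choose_spec hw).1⟩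
       else Sum.inr ⟨0, hq1⟩)
    else Sum.inl ⟨σ x.1, hAmem x.1 x.2 hx, hc⟩
    with hf
  -- full neighbourhood vertices see everything / are isolated from H
  have hWiso : ∀ b : V, b ∈ S → σ b = c₀ → (¬ ∃ m, m ∈ A' ∧ m ∉ σ '' nbS G S b) →
      ∀ a : V, a ∈ S → G.Adj b a → σ a ∈ A := by
    intro b hbS hbc hw a haS hadj
    push_neg at hw
    have hsub : A ⊆ σ '' nbS G S b := by
      intro m hm
      by_cases hmc : m = c₀
      · exact ⟨b, mem_nbS_self G hbS, by rw [hmc, hbc]⟩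
      · exact hw m ⟨hm, hmc⟩
    have heq : A = σ '' nbS G S b :=
      Set.eq_of_subset_of_ncard_le hsub (hmax b hbS) (Set.toFinite _)
    rw [heq]
    exact ⟨a, mem_nbS_of_adj haS hadj, rfl⟩
  have hvalid : ∀ {a b : ↥S}, (G.induce S).Adj a b → f a ≠ f b := by
    intro a b hab hfeq
    have hGab : G.Adj a.1 b.1 := hab
    have hσab : σ a.1 ≠ σ b.1 := hσ hGab
    by_cases ha : σ a.1 ∈ U <;> by_cases hb : σ b.1 ∈ U
    · -- both in H : proper by τ
      simp only [hf, dif_pos ha, dif_pos hb] at hfeq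
      have : (G.induce H).Adj ⟨a.1, a.2, ha⟩ ⟨b.1, b.2, hb⟩ := hGab
      exact τ.valid this (by simpa using hfeq)
    · -- a in H, b not
      by_cases hbc : σ b.1 = c₀
      · by_cases hw : ∃ m, m ∈ A' ∧ m ∉ σ '' nbS G S b.1
        · simp only [hf, dif_pos ha, dif_neg hb, dif_pos hbc] at hfeq
          rw [dif_pos hw] at hfeq
          exact absurd hfeq (by simp)
        · exact ha.2 (hWiso b.1 b.2 hbc hw a.1 a.2 hGab.symm)
      · simp [hf, dif_pos ha, dif_neg hb, dif_neg hbc] at hfeq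
    · by_cases hac : σ a.1 = c₀
      · by_cases hw : ∃ m, m ∈ A' ∧ m ∉ σ '' nbS G S a.1
        · simp only [hf, dif_neg ha, dif_pos hb, dif_pos hac] at hfeq
          rw [dif_pos hw] at hfeq
          exact absurd hfeq (by simp)
        · exact hb.2 (hWiso a.1 a.2 hac hw b.1 b.2 hGab)
      · simp [hf, dif_neg ha, dif_pos hb, dif_neg hac] at hfeq
    · -- neither in H
      by_cases hac : σ a.1 = c₀ <;> by_cases hbc : σ b.1 = c₀
      · exact hσab (by rw [hac, hbc])
      · -- a is c₀-class, b keeps its colour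
        by_cases hw : ∃ m, m ∈ A' ∧ m ∉ σ '' nbS G S a.1
        · simp only [hf, dif_neg ha, dif_neg hb, dif_pos hac, dif_neg hbc] at hfeq
          rw [dif_pos hw] at hfeq
          have : Classical.choose hw = σ b.1 := congrArg Subtype.val (Sum.inl.inj hfeq)
          exact (Classical.choose_spec hw).2 (this ▸ ⟨b.1, mem_nbS_of_adj b.2 hGab, rfl⟩)
        · simp only [hf, dif_neg ha, dif_neg hb, dif_pos hac, dif_neg hbc] at hfeq
          rw [dif_neg hw] at hfeq
          exact absurd hfeq (by simp)
      · by_cases hw : ∃ m, m ∈ A' ∧ m ∉ σ '' nbS G S b.1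
        · simp only [hf, dif_neg ha, dif_neg hb, dif_neg hac, dif_pos hbc] at hfeq
          rw [dif_pos hw] at hfeq
          have : σ a.1 = Classical.choose hw := congrArg Subtype.val (Sum.inl.inj hfeq)
          exact (Classical.choose_spec hw).2 (this ▸ ⟨a.1, mem_nbS_of_adj a.2 hGab.symm, rfl⟩)
        · simp only [hf, dif_neg ha, dif_neg hb, dif_neg hac, dif_pos hbc] at hfeq
          rw [dif_neg hw] at hfeq
          exact absurd hfeq (by simp)
      · simp only [hf, dif_neg ha, dif_neg hb, dif_neg hac, dif_neg hbc] at hfeq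
        exact hσab (by simpa using congrArg Subtype.val (Sum.inl.inj hfeq))
  have hcol : (G.induce S).Colorable (Fintype.card (↥A' ⊕ Fin q)) :=
    colorable_of_coloring_card _ (SimpleGraph.Coloring.mk f hvalid) le_rfl
  have hcard : Fintype.card (↥A' ⊕ Fin q) = A'.ncard + q := by
    rw [Fintype.card_sum, Fintype.card_fin, ncard_eq_card_coe]
  have hA'card : A'.ncard = A.ncard - 1 :=
    Set.ncard_diff_singleton_of_mem hc₀A
  have hApos : 0 < A.ncard := (Set.ncard_pos (Set.toFinite _)).mpr ⟨c₀, hc₀A⟩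
  have := chromNum_le_of_colorable _ hcol
  rw [hcard, hA'card] at this
  omega


lemma cover_lemma {V : Type*} [Fintype V] (G : SimpleGraph V) {σ : V → ℕ}
    (hσ : IsProperColoring G σ) :
    ∀ (n : ℕ) (S : Set V), (σ '' S).ncard = n →
    ∃ T : Finset V, (↑T : Set V) ⊆ S ∧
      (∀ u ∈ T, ∀ v ∈ T, u ≠ v → ¬ G.Adj u v) ∧
      (∀ c ∈ σ '' S, ∃ v ∈ T, c ∈ σ '' nbS G S v) ∧
      T.card + chromNum (G.induce S) ≤ n + 1 := by
  classical
  intro n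
  induction n using Nat.strong_induction_on with
  | _ n IH =>
    intro S hS
    by_cases hSne : S.Nonempty
    case neg =>
      -- S empty
      refine ⟨∅, by simp, by simp, ?_, ?_⟩
      · intro c hc
        obtain ⟨x, hx, _⟩ := hc
        exact absurd ⟨x, hx⟩ hSne
      · have := chromNum_induce_le_ncard_image G hσ S
        simp only [Finset.card_empty, zero_add, hS] at *
        omega
    case pos =>
      -- pick max-diversity vertex
      have hfin : S.Finite := Set.toFinite S
      obtain ⟨v₁, hv₁, hmax⟩ := Set.exists_max_image S (fun v => (σ '' nbS G S v).ncard) hfin hSne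
      by_cases hU : (σ '' S \ σ '' nbS G S v₁).Nonempty
      case neg =>
        -- single neighbourhood covers all colours
        have hcov : σ '' S ⊆ σ '' nbS G S v₁ := by
          intro c hc
          by_contra h
          exact hU ⟨c, hc, h⟩
        refine ⟨{v₁}, by simpa using hv₁, by simp, ?_, ?_⟩
        · intro c hc
          exact ⟨v₁, Finset.mem_singleton_self _, hcov hc⟩
        · have := chromNum_induce_le_ncard_image G hσ S
          simp only [Finset.card_singleton, hS] at *
          omega
      case pos =>
        set A : Set ℕ := σ '' nbS G S v₁ with hA
        set U : Set ℕ := σ '' S \ A with hUdef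
        set H : Set V := {x | x ∈ S ∧ σ x ∈ U} with hH
        have himg : σ '' H = U := by
          apply Set.Subset.antisymm
          · rintro c ⟨x, hx, rfl⟩
            exact hx.2
          · rintro c hc
            obtain ⟨x, hxS, rfl⟩ := hc.1
            exact ⟨x, ⟨hxS, hc⟩, rfl⟩
        have hUn : U.ncard < n := by
          rw [← hS]
          apply Set.ncard_lt_ncard _ (Set.toFinite _)
          constructor
          · exact Set.diff_subset
          · intro hsub
            have : σ v₁ ∈ U := hsub ⟨v₁, hv₁, rfl⟩
            exact this.2 ⟨v₁, mem_nbS_self G hv₁, rfl⟩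
        obtain ⟨T', hT'sub, hT'adj, hT'cov, hT'card⟩ := IH U.ncard hUn H (by rw [himg])
        have hkey : chromNum (G.induce S) + 1 ≤ chromNum (G.induce H) + A.ncard :=
          key_ineq G hσ S v₁ hv₁ hmax hU
        -- combine
        have hv₁T' : v₁ ∉ T' := by
          intro hmem
          have : v₁ ∈ H := hT'sub hmem
          exact this.2.2 ⟨v₁, mem_nbS_self G hv₁, rfl⟩
        refine ⟨insert v₁ T', ?_, ?_, ?_, ?_⟩
        · intro x hx
          rcases Finset.mem_insert.mp hx with h | h
          · exact h ▸ hv₁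
          · exact (hT'sub h).1
        · intro u hu v hv huv
          rcases Finset.mem_insert.mp hu with h1 | h1 <;>
            rcases Finset.mem_insert.mp hv with h2 | h2
          · exact absurd (h1.trans h2.symm) huv
          · subst h1
            intro hadj
            have hvH : v ∈ H := hT'sub h2
            exact hvH.2.2 ⟨v, mem_nbS_of_adj hvH.1 hadj, rfl⟩
          · subst h2
            intro hadj
            have huH : u ∈ H := hT'sub h1
            exact huH.2.2 ⟨u, mem_nbS_of_adj huH.1 hadj.symm, rfl⟩
          · exact hT'adj u h1 v h2 huv
        · intro c hc
          by_cases hcA : c ∈ A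
          · exact ⟨v₁, Finset.mem_insert_self _ _, hcA⟩
          · have hcU : c ∈ U := ⟨hc, hcA⟩
            obtain ⟨v, hvT', hvc⟩ := hT'cov c (by rw [himg]; exact hcU)
            refine ⟨v, Finset.mem_insert_of_mem hvT', ?_⟩
            obtain ⟨x, hxnb, rfl⟩ := hvc
            exact ⟨x, ⟨hxnb.1, (hxnb.2 : x ∈ H).1⟩, rfl⟩
        · rw [Finset.card_insert_of_notMem hv₁T']
          have hAn : A.ncard + U.ncard = n := by
            rw [← hS, hUdef]
            have h1 : A ⊆ σ '' S := by
              apply Set.image_mono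
              exact nbS_subset G S v₁
            rw [Set.ncard_diff h1 (Set.toFinite _)]
            have : A.ncard ≤ (σ '' S).ncard := Set.ncard_le_ncard h1 (Set.toFinite _)
            omega
          omega


lemma nbhd_colorable {V : Type*} [Fintype V] (G : SimpleGraph V) {s : ℕ} (v : V)
    (h : chromNum (G.induce (insert v (G.neighborSet v))) ≤ s) :
    (G.induce (G.neighborSet v)).Colorable (s - 1) := by
  classical
  obtain ⟨g⟩ := (chromNum_colorable (G.induce (insert v (G.neighborSet v)))).mono h
  set a : Fin s := g ⟨v, Set.mem_insert _ _⟩ with ha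
  have C : (G.induce (G.neighborSet v)).Coloring {c : Fin s // c ≠ a} :=
    SimpleGraph.Coloring.mk
      (fun u => ⟨g ⟨u.1, Set.mem_insert_of_mem _ u.2⟩, by
        have hadj : (G.induce (insert v (G.neighborSet v))).Adj
            ⟨u.1, Set.mem_insert_of_mem _ u.2⟩ ⟨v, Set.mem_insert _ _⟩ :=
          ((u.2 : G.Adj v u.1).symm : G.Adj u.1 v)
        exact g.valid hadj⟩)
      (by
        intro x y hxy hfeq
        have hadj : (G.induce (insert v (G.neighborSet v))).Adj
            ⟨x.1, Set.mem_insert_of_mem _ x.2⟩ ⟨y.1, Set.mem_insert_of_mem _ y.2⟩ :=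
          (hxy : G.Adj x.1 y.1)
        exact g.valid hadj (congrArg Subtype.val hfeq))
  apply colorable_of_coloring_card _ C
  have : Fintype.card {c : Fin s // c ≠ a} = s - 1 := by
    simp [Fintype.card_subtype_compl]
  omega

lemma union_nbhd_colorable {V : Type*} [Fintype V] (G : SimpleGraph V) {s : ℕ}
    (T : Finset V)
    (hadj : ∀ u ∈ T, ∀ v ∈ T, u ≠ v → ¬ G.Adj u v)
    (hcol : ∀ v ∈ T, (G.induce (G.neighborSet v)).Colorable (s - 1)) :
    (G.induce (⋃ v ∈ T, insert v (G.neighborSet v))).Colorable (T.card * (s - 1) + 1) := by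
  classical
  set X : Set V := ⋃ v ∈ T, insert v (G.neighborSet v) with hX
  have τ : ∀ v (hv : v ∈ T), (G.induce (G.neighborSet v)).Coloring (Fin (s - 1)) :=
    fun v hv => (hcol v hv).some
  have hpick : ∀ x : V, ∃ v : V, (x ∈ X ∧ x ∉ T) → (v ∈ T ∧ x ∈ G.neighborSet v) := by
    intro x
    by_cases h : x ∈ X ∧ x ∉ T
    · obtain ⟨v, hv, hxv⟩ := Set.mem_iUnion₂.mp h.1
      rcases Set.mem_insert_iff.mp hxv with h' | h'
      · exact absurd (h' ▸ hv) h.2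
      · exact ⟨v, fun _ => ⟨hv, h'⟩⟩
    · exact ⟨x, fun hc => absurd hc h⟩
  choose pick hpickspec using hpick
  set f : ↥X → Option (↥T × Fin (s - 1)) := fun x =>
    if hx : x.1 ∈ T then none
    else
      some (⟨pick x.1, (hpickspec x.1 ⟨x.2, hx⟩).1⟩,
        τ (pick x.1) (hpickspec x.1 ⟨x.2, hx⟩).1 ⟨x.1, (hpickspec x.1 ⟨x.2, hx⟩).2⟩)
    with hf
  have hvalid : ∀ {x y : ↥X}, (G.induce X).Adj x y → f x ≠ f y := by
    intro x y hxy hfeq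
    have hGxy : G.Adj x.1 y.1 := hxy
    by_cases hx : x.1 ∈ T <;> by_cases hy : y.1 ∈ T
    · exact hadj x.1 hx y.1 hy (fun h => G.ne_of_adj hGxy (by exact_mod_cast h)) hGxy
    · simp [hf, dif_pos hx, dif_neg hy] at hfeq
    · simp [hf, dif_neg hx, dif_pos hy] at hfeq
    · simp only [hf, dif_neg hx, dif_neg hy, Option.some.injEq, Prod.mk.injEq,
        Subtype.mk.injEq] at hfeq
      obtain ⟨hveq, hceq⟩ := hfeq
      have key : ∀ (v w : V) (hv : v ∈ T) (hw : w ∈ T) (hxv : x.1 ∈ G.neighborSet v)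
          (hyw : y.1 ∈ G.neighborSet w), v = w →
          τ v hv ⟨x.1, hxv⟩ = τ w hw ⟨y.1, hyw⟩ → False := by
        intro v w hv hw hxv hyw hvw
        subst hvw
        intro hceq'
        have hadjH : (G.induce (G.neighborSet v)).Adj ⟨x.1, hxv⟩ ⟨y.1, hyw⟩ := hGxy
        exact (τ v hv).valid hadjH hceq'
      exact key _ _ _ _ _ _ hveq hceq
  have C : (G.induce X).Coloring (Option (↥T × Fin (s - 1))) := SimpleGraph.Coloring.mk f hvalid
  apply colorable_of_coloring_card _ C
  simp [Fintype.card_option, Fintype.card_prod]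


/-- For integers `s ≥ 2` and `k ≥ 0`, every finite locally `s`-colourable
graph `G` with at least one vertex (and `χ(G)+k ≤ |V(G)|`) satisfies
`f_G(χ(G)+k) ≤ (s-1)(k+1)+1`. -/
theorem fG_locallyColourable {V : Type*} [Fintype V] [Nonempty V]
    (s k : ℕ) (hs : 2 ≤ s) (G : SimpleGraph V) (hloc : LocallyColorable G s)
    (hpk : chromNum G + k ≤ Fintype.card V) :
    fG G (chromNum G + k) ≤ (s - 1) * (k + 1) + 1 := by
  classical
  have hbound : ∀ m ∈ {m : ℕ | ∃ σ : V → ℕ, IsProperColoring G σ ∧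
      (σ '' Set.univ).ncard = chromNum G + k ∧ m = minRainbowChrom G σ (chromNum G + k)},
      m ≤ (s - 1) * (k + 1) + 1 := by
    rintro m ⟨σ, hσ, hp, rfl⟩
    obtain ⟨T, hTsub, hTadj, hTcov, hTcard⟩ := cover_lemma G hσ (chromNum G + k) Set.univ hp
    have hchi : chromNum (G.induce Set.univ) = chromNum G := chromNum_induce_univ G
    have hT : T.card ≤ k + 1 := by rw [hchi] at hTcard; omega
    have hXcol : (G.induce (⋃ v ∈ T, insert v (G.neighborSet v))).Colorable
        (T.card * (s - 1) + 1) :=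
      union_nbhd_colorable G T hTadj (fun v _ => nbhd_colorable G v (hloc v))
    have hXimg : (σ '' (⋃ v ∈ T, insert v (G.neighborSet v))).ncard = chromNum G + k := by
      have h1 : σ '' (⋃ v ∈ T, insert v (G.neighborSet v)) ⊆ σ '' Set.univ :=
        Set.image_mono (Set.subset_univ _)
      have h2 : σ '' Set.univ ⊆ σ '' (⋃ v ∈ T, insert v (G.neighborSet v)) := by
        intro c hc
        obtain ⟨v, hvT, hcnb⟩ := hTcov c hc
        obtain ⟨x, hxnb, rfl⟩ := hcnb
        exact ⟨x, Set.mem_iUnion₂.mpr ⟨v, hvT, hxnb.1⟩, rfl⟩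
      rw [Set.Subset.antisymm h1 h2, hp]
    have hmin : minRainbowChrom G σ (chromNum G + k) ≤
        chromNum (G.induce (⋃ v ∈ T, insert v (G.neighborSet v))) := by
      apply Nat.sInf_le
      exact ⟨_, hXimg, rfl⟩
    have hle : chromNum (G.induce (⋃ v ∈ T, insert v (G.neighborSet v))) ≤
        T.card * (s - 1) + 1 := chromNum_le_of_colorable _ hXcol
    have hmul : T.card * (s - 1) ≤ (k + 1) * (s - 1) := Nat.mul_le_mul_right _ hT
    have : minRainbowChrom G σ (chromNum G + k) ≤ (s - 1) * (k + 1) + 1 := by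
      calc minRainbowChrom G σ (chromNum G + k) ≤ T.card * (s - 1) + 1 := le_trans hmin hle
        _ ≤ (k + 1) * (s - 1) + 1 := by omega
        _ = (s - 1) * (k + 1) + 1 := by rw [Nat.mul_comm]
    exact this
  rcases Set.eq_empty_or_nonempty {m : ℕ | ∃ σ : V → ℕ, IsProperColoring G σ ∧
      (σ '' Set.univ).ncard = chromNum G + k ∧ m = minRainbowChrom G σ (chromNum G + k)}
    with he | hne
  · rw [fG, he]
    simp
  · rw [fG]
    exact csSup_le hne hbound
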